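/- (Theorem 2.) Along any solution of the Kowalevski equations in two constant fields, the function T = (1/2)(M_α M₁ + M_β M₂) − 2(α₁β₂ − α₂β₁) + a² + b² (for any real constants a, b) satisfies dT/dt = (1/4)·ω₃·(M_α M₂ − M_β M₁). Consequently, if M_α M₂ − M_β M₁ = 0 identically on an interval, then T is constant on that interval. -/

import Mathlib

/-- Theorem 2: along any solution of the Kowalevski equations in two constant fields, the
function `T = (1/2)(Mα M₁ + Mβ M₂) - 2(α₁ β₂ - α₂ β₁) + a² + b²` satisfies
`dT/dt = (1/4) ω₃ (Mα M₂ - Mβ M₁)`; consequently, if `Mα M₂ - Mβ M₁ = 0` identically on an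
interval `I`, then `T` is constant on `I`. -/
theorem stmt_2
    (a b : ℝ)
    (ω₁ ω₂ ω₃ α₁ α₂ α₃ β₁ β₂ β₃ : ℝ → ℝ)
    (hω₁ : ∀ t, HasDerivAt ω₁ ((ω₂ t * ω₃ t + β₃ t) / 2) t)
    (hω₂ : ∀ t, HasDerivAt ω₂ ((-(ω₁ t * ω₃ t) - α₃ t) / 2) t)
    (hω₃ : ∀ t, HasDerivAt ω₃ (α₂ t - β₁ t) t)
    (hα₁ : ∀ t, HasDerivAt α₁ (α₂ t * ω₃ t - α₃ t * ω₂ t) t)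
    (hα₂ : ∀ t, HasDerivAt α₂ (α₃ t * ω₁ t - α₁ t * ω₃ t) t)
    (hα₃ : ∀ t, HasDerivAt α₃ (α₁ t * ω₂ t - α₂ t * ω₁ t) t)
    (hβ₁ : ∀ t, HasDerivAt β₁ (β₂ t * ω₃ t - β₃ t * ω₂ t) t)
    (hβ₂ : ∀ t, HasDerivAt β₂ (β₃ t * ω₁ t - β₁ t * ω₃ t) t)
    (hβ₃ : ∀ t, HasDerivAt β₃ (β₁ t * ω₂ t - β₂ t * ω₁ t) t)
    (M₁ M₂ Mα Mβ T : ℝ → ℝ)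
    (hM₁ : M₁ = fun t => 2 * ω₁ t)
    (hM₂ : M₂ = fun t => 2 * ω₂ t)
    (hMα : Mα = fun t => 2 * ω₁ t * α₁ t + 2 * ω₂ t * α₂ t + ω₃ t * α₃ t)
    (hMβ : Mβ = fun t => 2 * ω₁ t * β₁ t + 2 * ω₂ t * β₂ t + ω₃ t * β₃ t)
    (hT : T = fun t =>
      (1 / 2) * (Mα t * M₁ t + Mβ t * M₂ t) - 2 * (α₁ t * β₂ t - α₂ t * β₁ t)
        + a ^ 2 + b ^ 2) :
    (∀ t, HasDerivAt T ((1 / 4) * ω₃ t * (Mα t * M₂ t - Mβ t * M₁ t)) t) ∧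
    (∀ I : Set ℝ, I.OrdConnected → (∀ t ∈ I, Mα t * M₂ t - Mβ t * M₁ t = 0) →
      ∀ t₁ ∈ I, ∀ t₂ ∈ I, T t₁ = T t₂) := by

  have key : ∀ t, HasDerivAt T ((1 / 4) * ω₃ t * (Mα t * M₂ t - Mβ t * M₁ t)) t := by
    intro t
    have hMα' : HasDerivAt (fun t => 2 * ω₁ t * α₁ t + 2 * ω₂ t * α₂ t + ω₃ t * α₃ t)
        ((2 * ((ω₂ t * ω₃ t + β₃ t) / 2) * α₁ t + 2 * ω₁ t * (α₂ t * ω₃ t - α₃ t * ω₂ t))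
          + (2 * ((-(ω₁ t * ω₃ t) - α₃ t) / 2) * α₂ t + 2 * ω₂ t * (α₃ t * ω₁ t - α₁ t * ω₃ t))
          + ((α₂ t - β₁ t) * α₃ t + ω₃ t * (α₁ t * ω₂ t - α₂ t * ω₁ t))) t :=
      ((((hω₁ t).const_mul 2).mul (hα₁ t)).add (((hω₂ t).const_mul 2).mul (hα₂ t))).add
        ((hω₃ t).mul (hα₃ t))
    have hMβ' : HasDerivAt (fun t => 2 * ω₁ t * β₁ t + 2 * ω₂ t * β₂ t + ω₃ t * β₃ t)
        ((2 * ((ω₂ t * ω₃ t + β₃ t) / 2) * β₁ t + 2 * ω₁ t * (β₂ t * ω₃ t - β₃ t * ω₂ t))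
          + (2 * ((-(ω₁ t * ω₃ t) - α₃ t) / 2) * β₂ t + 2 * ω₂ t * (β₃ t * ω₁ t - β₁ t * ω₃ t))
          + ((α₂ t - β₁ t) * β₃ t + ω₃ t * (β₁ t * ω₂ t - β₂ t * ω₁ t))) t :=
      ((((hω₁ t).const_mul 2).mul (hβ₁ t)).add (((hω₂ t).const_mul 2).mul (hβ₂ t))).add
        ((hω₃ t).mul (hβ₃ t))
    have hM₁' : HasDerivAt (fun t => 2 * ω₁ t) (2 * ((ω₂ t * ω₃ t + β₃ t) / 2)) t :=
      (hω₁ t).const_mul 2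
    have hM₂' : HasDerivAt (fun t => 2 * ω₂ t) (2 * ((-(ω₁ t * ω₃ t) - α₃ t) / 2)) t :=
      (hω₂ t).const_mul 2
    have H := ((((hMα'.mul hM₁').add (hMβ'.mul hM₂')).const_mul (1/2 : ℝ)).sub
        ((((hα₁ t).mul (hβ₂ t)).sub ((hα₂ t).mul (hβ₁ t))).const_mul 2)).add_const (a ^ 2)
    have H2 := H.add_const (b ^ 2)
    rw [hT, hMα, hMβ, hM₁, hM₂]
    refine H2.congr_deriv ?_
    ring
  refine ⟨key, ?_⟩
  intro I hI hzero t₁ h₁ t₂ h₂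
  have hconv : Convex ℝ I := hI.convex
  have hder : ∀ t ∈ I, HasDerivWithinAt T 0 I t := by
    intro t ht
    have := (key t).hasDerivWithinAt (s := I)
    rwa [hzero t ht, mul_zero] at this
  have hb : ∀ t ∈ I, ‖(0 : ℝ)‖ ≤ 0 := by intro t _; simp
  have := hconv.norm_image_sub_le_of_norm_hasDerivWithin_le hder hb h₂ h₁
  rw [zero_mul] at this
  exact sub_eq_zero.mp (norm_le_zero_iff.mp this)
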